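/- Single-step expectation bound: suppose s,t are nodes at weighted distance ℓ, and a random partition places s,t in different parts with probability at most min{1, α·ℓ/ρⁱ}, in which case s and t are each moved to centers at distance at most ρⁱ (costing a new demand of ℓ1-mass 2 with OPT at most ℓ + 2ρⁱ), and otherwise the demand cancels. Define Φ_{i−1} = ℓ + 2ρ^{i−1} and the post-step potential Φ_i = OPT(d_i) + ‖d_i‖₁·ρⁱ. Then E[max{Φ_i, Φ_{i−1}}] ≤ 6α·Φ_{i−1}. -/

import Mathlib

open MeasureTheory

/-- Single-step expectation bound for the LDD routing potential:
if `s,t` are at distance `ℓ` and are separated with probability at most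
`min{1, α·ℓ/ρⁱ}` (in which case `Φᵢ ≤ ℓ + 4ρⁱ`), and otherwise the demand cancels
(`Φᵢ = 0`), then `E[max{Φᵢ, Φᵢ₋₁}] ≤ 6α·Φᵢ₋₁` where `Φᵢ₋₁ = ℓ + 2ρ^{i−1}`. -/
theorem stmt6 {Ω : Type*} [MeasurableSpace Ω] (μ : Measure Ω) [IsProbabilityMeasure μ]
    (α ρ ℓ : ℝ) (i : ℕ) (hα : 1 ≤ α) (hρ : 1 ≤ ρ) (hℓ : 0 ≤ ℓ) (hi : 1 ≤ i)
    (A : Set Ω) (hA : MeasurableSet A)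
    (Φi : Ω → ℝ) (hmeas : Measurable Φi)
    (hp : (μ A).toReal ≤ min 1 (α * ℓ / ρ ^ i))
    (hin : ∀ ω ∈ A, Φi ω ≤ ℓ + 4 * ρ ^ i)
    (hout : ∀ ω ∉ A, Φi ω = 0) :
    (∫ ω, max (Φi ω) (ℓ + 2 * ρ ^ (i - 1)) ∂μ)
      ≤ 6 * α * (ℓ + 2 * ρ ^ (i - 1)) := by
  set c : ℝ := ℓ + 2 * ρ ^ (i - 1) with hc
  set L : ℝ := ℓ + 4 * ρ ^ i with hL
  have hρ0 : (0:ℝ) < ρ := lt_of_lt_of_le one_pos hρ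
  have hpow : ρ ^ (i - 1) ≤ ρ ^ i := pow_le_pow_right₀ hρ (Nat.sub_le i 1)
  have hpow1 : (1:ℝ) ≤ ρ ^ (i-1) := one_le_pow₀ hρ
  have hpowi1 : (1:ℝ) ≤ ρ ^ i := one_le_pow₀ hρ
  have hc0 : 0 < c := by positivity
  have hcL : c ≤ L := by
    simp only [hc, hL]
    nlinarith
  have hbound : ∀ ω, max (Φi ω) c ≤ A.indicator (fun _ => L - c) ω + c := by
    intro ω
    by_cases h : ω ∈ A
    · simp only [Set.indicator_of_mem h]
      have := hin ω h
      have : max (Φi ω) c ≤ L := max_le (by linarith) hcL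
      linarith
    · simp only [Set.indicator_of_notMem h, hout ω h, zero_add]
      simp [le_max_iff]; linarith
  have hintRHS : Integrable (fun ω => A.indicator (fun _ => L - c) ω + c) μ := by
    exact ((integrable_const (L - c)).indicator hA).add (integrable_const c)
  have hintLHS : Integrable (fun ω => max (Φi ω) c) μ := by
    apply Integrable.mono' (integrable_const L)
    · exact (hmeas.max measurable_const).aestronglyMeasurable
    · filter_upwards with ω
      rw [Real.norm_eq_abs, abs_le]
      constructor
      · by_cases h : ω ∈ A
        · have := hin ω h
          have h1 : -L ≤ c := by linarith
          exact le_trans h1 (le_max_right _ _)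
        · simp [hout ω h, le_max_iff]; right; linarith
      · by_cases h : ω ∈ A
        · exact max_le (hin ω h) hcL
        · simp [hout ω h, le_max_iff]
          constructor <;> linarith
  have hint : (∫ ω, max (Φi ω) c ∂μ) ≤ ∫ ω, (A.indicator (fun _ => L - c) ω + c) ∂μ :=
    integral_mono hintLHS hintRHS hbound
  have hcalc : (∫ ω, (A.indicator (fun _ => L - c) ω + c) ∂μ)
      = (μ A).toReal * (L - c) + c := by
    rw [integral_add ((integrable_const (L - c)).indicator hA) (integrable_const c),
      integral_indicator_const _ hA, integral_const]
    simp [smul_eq_mul]; left; rfl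
  set p := (μ A).toReal with hpd
  have hp0 : 0 ≤ p := ENNReal.toReal_nonneg
  have hp1 : p ≤ 1 := le_trans hp (min_le_left _ _)
  have hp2 : p * ρ ^ i ≤ α * ℓ := by
    have h2 : p ≤ α * ℓ / ρ ^ i := le_trans hp (min_le_right _ _)
    have := mul_le_mul_of_nonneg_right h2 (le_of_lt (by positivity : (0:ℝ) < ρ ^ i))
    rwa [div_mul_cancel₀] at this
    positivity
  have hfinal : p * (L - c) + c ≤ 6 * α * c := by
    have hℓc : ℓ ≤ c := by simp only [hc]; nlinarith
    have h1 : p * (L - c) ≤ p * ℓ + p * (4 * ρ ^ i) := by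
      simp only [hL, hc]; nlinarith
    have h2 : p * ℓ ≤ c := le_trans (by nlinarith) hℓc
    have h3 : p * (4 * ρ ^ i) ≤ 4 * (α * ℓ) := by nlinarith
    have h4 : α * ℓ ≤ α * c := by nlinarith
    nlinarith
  calc (∫ ω, max (Φi ω) c ∂μ) ≤ p * (L - c) + c := by rw [← hcalc]; exact hint
    _ ≤ 6 * α * c := hfinal
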